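/- Let α be a real number with α ≠ 1/2 and let A₂ be the 3×3 matrix with rows [(1-α)², 2α(1-α), α²], [α(1-α), (1-α)²+α², α(1-α)], [α², 2α(1-α), (1-α)²]. Then A₂ is invertible and its inverse is (1/(1-2α)²) times the matrix with entries (-1)^(i+j)·A₂(i,j). -/

import Mathlib

theorem stmt_1 (α : ℝ) (hα : α ≠ 1/2) :
    let A : Matrix (Fin 3) (Fin 3) ℝ :=
      !![(1-α)^2, 2*α*(1-α), α^2;
         α*(1-α), (1-α)^2 + α^2, α*(1-α);
         α^2, 2*α*(1-α), (1-α)^2]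
    IsUnit A ∧
      A⁻¹ = (1/(1-2*α)^2) • Matrix.of (fun i j : Fin 3 => (-1 : ℝ) ^ ((i : ℕ) + (j : ℕ)) * A i j) := by
  intro A
  have hne : (1 - 2*α) ≠ 0 := by
    intro h; apply hα; linarith
  have hmul : A * ((1/(1-2*α)^2) • Matrix.of
      (fun i j : Fin 3 => (-1 : ℝ) ^ ((i : ℕ) + (j : ℕ)) * A i j)) = 1 := by
    ext i j
    fin_cases i <;> fin_cases j <;>
      simp [A, Matrix.mul_apply, Fin.sum_univ_succ, Matrix.one_apply] <;>
      field_simp [show (1:ℝ) - α * 2 ≠ 0 by intro h; apply hne; linarith] <;> ring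
  have hinv := Matrix.inv_eq_right_inv hmul
  exact ⟨(Matrix.isUnit_iff_isUnit_det A).mpr (Matrix.isUnit_det_of_right_inverse hmul), hinv⟩
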